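/- Let K ⊆ ℝ^g be a bounded polyhedron containing 0 in its interior. Then K is the image under a coordinate projection of a simplex in ℝ^h (for some h ≥ g) containing 0 in its interior. -/

import Mathlib

open Matrix

namespace BPProj
variable {g m : ℕ} (a : Matrix (Fin m) (Fin g) ℝ) (b : Fin m → ℝ)

def Kset : Set (Fin g → ℝ) := {x | ∀ i, a.mulVec x i ≤ b i}

def Ext : Set (Fin g → ℝ) :=
  {x | x ∈ Kset a b ∧ ∀ d : Fin g → ℝ, (∀ i, a.mulVec x i = b i → a.mulVec d i = 0) → d = 0}

lemma kset_convex : Convex ℝ (Kset a b) := by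
  intro x hx y hy s t hs ht hst
  intro i
  have : a.mulVec (s • x + t • y) i = s * a.mulVec x i + t * a.mulVec y i := by
    simp [Matrix.mulVec_add, Matrix.mulVec_smul]
  rw [this]
  calc s * a.mulVec x i + t * a.mulVec y i ≤ s * b i + t * b i := by
        gcongr <;> [exact hx i; exact hy i]
    _ = b i := by rw [← add_mul, hst, one_mul]

lemma ext_finite : (Ext a b).Finite := by
  have : Set.InjOn (fun x => {i | a.mulVec x i = b i}) (Ext a b) := by
    intro x hx y hy hxy
    have hd : ∀ i, a.mulVec x i = b i → a.mulVec (y - x) i = 0 := by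
      intro i hi
      have hiy : a.mulVec y i = b i := by
        have : i ∈ {i | a.mulVec x i = b i} := hi
        have h2 := hxy ▸ (show i ∈ (fun x => {i | a.mulVec x i = b i}) x from hi)
        exact h2
      simp [Matrix.mulVec_sub, hiy, hi]
    have := hx.2 (y - x) hd
    have : y = x := by
      have := sub_eq_zero.mp this; exact this
    exact this.symm
  exact Set.Finite.of_finite_image (Set.toFinite _) this

def Wsub (x : Fin g → ℝ) : Submodule ℝ (Fin g → ℝ) where
  carrier := {d | ∀ i, a.mulVec x i = b i → a.mulVec d i = 0}
  add_mem' := by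
    intro d e hd he i hi
    simp [Matrix.mulVec_add, hd i hi, he i hi]
  zero_mem' := by intro i hi; simp
  smul_mem' := by
    intro c d hd i hi
    simp [Matrix.mulVec_smul, hd i hi]

/-- If `d ∈ Wsub x`, `d ≠ 0`, we can move from `x` along `d` to a point of `K`
with strictly smaller `Wsub`, staying active.  -/
lemma move (hbdd : Bornology.IsBounded (Kset a b)) (x : Fin g → ℝ) (hx : x ∈ Kset a b)
    (d : Fin g → ℝ) (hd : d ∈ Wsub a b x) (hd0 : d ≠ 0) :
    ∃ t : ℝ, 0 ≤ t ∧ x + t • d ∈ Kset a b ∧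
      Wsub a b (x + t • d) < Wsub a b x := by
  -- some constraint must increase along d
  have hJ : ∃ j, 0 < a.mulVec d j := by
    by_contra hc
    push_neg at hc
    obtain ⟨C, hC⟩ := isBounded_iff_forall_norm_le.mp hbdd
    have hmem : ∀ t : ℝ, 0 ≤ t → x + t • d ∈ Kset a b := by
      intro t ht i
      have : a.mulVec (x + t • d) i = a.mulVec x i + t * a.mulVec d i := by
        simp [Matrix.mulVec_add, Matrix.mulVec_smul]
      rw [this]
      have : t * a.mulVec d i ≤ 0 := mul_nonpos_of_nonneg_of_nonpos ht (hc i)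
      linarith [hx i]
    have hdn : 0 < ‖d‖ := norm_pos_iff.mpr hd0
    have hC0 : 0 ≤ C := le_trans (norm_nonneg x) (hC x hx)
    set t := (C + ‖x‖ + 1) / ‖d‖ with ht
    have ht0 : 0 ≤ t := by positivity
    have := hC _ (hmem t ht0)
    have h1 : ‖t • d‖ ≤ ‖x + t • d‖ + ‖x‖ := by
      simpa using norm_sub_le (x + t • d) x
    have h2 : ‖t • d‖ = t * ‖d‖ := by
      rw [norm_smul, Real.norm_of_nonneg ht0]
    have h3 : t * ‖d‖ = C + ‖x‖ + 1 := by
      rw [ht, div_mul_cancel₀ _ hdn.ne']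
    nlinarith
  classical
  set J : Finset (Fin m) := Finset.univ.filter (fun j => 0 < a.mulVec d j) with hJdef
  have hJne : J.Nonempty := by
    obtain ⟨j, hj⟩ := hJ
    exact ⟨j, by simp [hJdef, hj]⟩
  set f : Fin m → ℝ := fun j => (b j - a.mulVec x j) / a.mulVec d j with hf
  obtain ⟨j₀, hj₀J, hj₀min⟩ := J.exists_min_image f hJne
  have hj₀pos : 0 < a.mulVec d j₀ := by
    simpa [hJdef] using hj₀J
  set t := f j₀ with htdef
  have ht0 : 0 ≤ t := by
    apply div_nonneg _ (le_of_lt hj₀pos)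
    linarith [hx j₀]
  have hval : ∀ i, a.mulVec (x + t • d) i = a.mulVec x i + t * a.mulVec d i := by
    intro i; simp [Matrix.mulVec_add, Matrix.mulVec_smul]
  have hmem : x + t • d ∈ Kset a b := by
    intro i
    rw [hval]
    rcases le_or_gt (a.mulVec d i) 0 with hle | hlt
    · nlinarith [hx i]
    · have hiJ : i ∈ J := by simp [hJdef, hlt]
      have := hj₀min i hiJ
      have : t ≤ (b i - a.mulVec x i) / a.mulVec d i := this
      have := (le_div_iff₀ hlt).mp this
      linarith
  have hact : a.mulVec (x + t • d) j₀ = b j₀ := by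
    rw [hval]
    rw [htdef, hf]
    field_simp
    ring
  refine ⟨t, ht0, hmem, ?_⟩
  constructor
  · -- Wsub (x + t•d) ≤ Wsub x
    intro e he
    intro i hi
    have hdi : a.mulVec d i = 0 := hd i hi
    have : a.mulVec (x + t • d) i = b i := by
      rw [hval, hdi]; simp [hi]
    exact he i this
  · -- not ≤ : d is in Wsub x but not in Wsub (x+t•d)
    intro hle
    have hdW : d ∈ Wsub a b (x + t • d) := hle hd
    have := hdW j₀ hact
    exact absurd this (ne_of_gt hj₀pos)

lemma key (hbdd : Bornology.IsBounded (Kset a b)) :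
    ∀ n : ℕ, ∀ x ∈ Kset a b, Module.finrank ℝ (Wsub a b x) ≤ n →
      x ∈ convexHull ℝ (Ext a b) := by
  intro n
  induction n with
  | zero =>
    intro x hx hr
    have hbot : Wsub a b x = ⊥ := by
      rw [← Submodule.finrank_eq_zero (R := ℝ) (M := Fin g → ℝ)]
      omega
    have hxe : x ∈ Ext a b := by
      refine ⟨hx, ?_⟩
      intro d hdW
      have : d ∈ Wsub a b x := hdW
      rw [hbot] at this
      simpa using this
    exact subset_convexHull ℝ _ hxe
  | succ n ih =>
    intro x hx hr
    by_cases hbot : Wsub a b x = ⊥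
    · have hxe : x ∈ Ext a b := by
        refine ⟨hx, ?_⟩
        intro d hdW
        have : d ∈ Wsub a b x := hdW
        rw [hbot] at this
        simpa using this
      exact subset_convexHull ℝ _ hxe
    · obtain ⟨d, hdW, hd0⟩ := Submodule.exists_mem_ne_zero_of_ne_bot hbot
      obtain ⟨t₁, ht₁0, hmem₁, hlt₁⟩ := move a b hbdd x hx d hdW hd0
      have hdW' : -d ∈ Wsub a b x := neg_mem hdW
      obtain ⟨t₂, ht₂0, hmem₂, hlt₂⟩ := move a b hbdd x hx (-d) hdW' (neg_ne_zero.mpr hd0)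
      have hrank₁ : Module.finrank ℝ (Wsub a b (x + t₁ • d)) ≤ n := by
        have := Submodule.finrank_lt_finrank_of_lt hlt₁
        omega
      have hrank₂ : Module.finrank ℝ (Wsub a b (x + t₂ • (-d))) ≤ n := by
        have := Submodule.finrank_lt_finrank_of_lt hlt₂
        omega
      have h₁ := ih _ hmem₁ hrank₁
      have h₂ := ih _ hmem₂ hrank₂
      rcases eq_or_lt_of_le (by positivity : (0:ℝ) ≤ t₁ + t₂) with hsum | hsum
      · -- t₁ = t₂ = 0
        have ht₁ : t₁ = 0 := by linarith
        have : x + t₁ • d = x := by rw [ht₁]; simp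
        rwa [this] at h₁
      · have hcx : (t₂ / (t₁ + t₂)) • (x + t₁ • d) + (t₁ / (t₁ + t₂)) • (x + t₂ • (-d)) ∈
            convexHull ℝ (Ext a b) := by
          have hconv := convex_convexHull ℝ (s := Ext a b)
          exact hconv h₁ h₂ (by positivity) (by positivity) (by field_simp; ring)
        have : (t₂ / (t₁ + t₂)) • (x + t₁ • d) + (t₁ / (t₁ + t₂)) • (x + t₂ • (-d)) = x := by
          have hne : t₁ + t₂ ≠ 0 := ne_of_gt hsum
          match_scalars <;> field_simp <;> ring
        rwa [this] at hcx

lemma construction (g N : ℕ) (K : Set (Fin g → ℝ)) (hKconv : Convex ℝ K)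
    (v : Fin N → Fin g → ℝ) (hvK : ∀ k, v k ∈ K) (hKv : K ⊆ convexHull ℝ (Set.range v))
    (hint : (0 : Fin g → ℝ) ∈ interior K) :
    ∃ (h : ℕ) (hgh : g ≤ h) (p : Fin (h + 1) → Fin h → ℝ),
      AffineIndependent ℝ p ∧
      (0 : Fin h → ℝ) ∈ interior (convexHull ℝ (Set.range p)) ∧
      K = (fun x : Fin h → ℝ => fun i : Fin g => x (Fin.castLE hgh i)) ''
        (convexHull ℝ (Set.range p)) := by
  classical
  -- a ball around 0 inside K
  obtain ⟨r, hr, hball⟩ := Metric.isOpen_iff.mp isOpen_interior 0 hint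
  have hballK : Metric.ball (0 : Fin g → ℝ) r ⊆ K := hball.trans interior_subset
  have h0K : (0 : Fin g → ℝ) ∈ K := interior_subset hint
  set δ : ℝ := r / 2 with hδ
  have hδpos : 0 < δ := by positivity
  -- the augmented generating family
  set ι := (Fin (g + 1)) ⊕ (Fin N) with hι
  set u : ι → (Fin g → ℝ) := fun k =>
    Sum.elim (fun i : Fin (g+1) => fun j : Fin g => if j.succ = i then δ else 0) v k with hu
  have huK : ∀ k, u k ∈ K := by
    rintro (i | k)
    · apply hballK
      rw [Metric.mem_ball, dist_zero_right]
      rw [pi_norm_lt_iff hr]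
      intro j
      simp only [hu, Sum.elim_inl]
      by_cases hji : j.succ = i
      · rw [if_pos hji, Real.norm_eq_abs, abs_of_nonneg hδpos.le, hδ]
        linarith
      · rw [if_neg hji]
        simpa using hr
    · exact hvK k
  have hKu : K = convexHull ℝ (Set.range u) := by
    apply Set.Subset.antisymm
    · refine hKv.trans (convexHull_mono ?_)
      rintro x ⟨k, rfl⟩
      exact ⟨Sum.inr k, rfl⟩
    · exact convexHull_min (fun x ⟨k, hk⟩ => hk ▸ huK k) hKconv
  -- positive weights λ with ∑ λ = 1 and ∑ λ • u = 0
  have hM : (0:ℝ) < (Fintype.card ι : ℝ) := by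
    have : 0 < Fintype.card ι := Fintype.card_pos_iff.mpr ⟨Sum.inl 0⟩
    exact_mod_cast this
  obtain ⟨lam, hlampos, hlam1, hlam0⟩ :
      ∃ lam : ι → ℝ, (∀ k, 0 < lam k) ∧ ∑ k, lam k = 1 ∧ ∑ k, lam k • u k = 0 := by
    set c : Fin g → ℝ := ∑ k, u k with hc
    set ε : ℝ := r / (2 * (‖c‖ + 1)) with hε
    have hεpos : 0 < ε := by positivity
    have hεc : (-ε) • c ∈ K := by
      apply hballK
      rw [Metric.mem_ball, dist_zero_right, norm_smul]
      have h1 : ‖(-ε)‖ = ε := by rw [norm_neg, Real.norm_of_nonneg hεpos.le]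
      rw [h1]
      have hcn : 0 ≤ ‖c‖ := norm_nonneg c
      rw [hε]
      rw [div_mul_eq_mul_div, mul_comm]
      rw [div_lt_iff₀ (by positivity)]
      nlinarith
    rw [hKu, convexHull_range_eq_exists_affineCombination] at hεc
    obtain ⟨s, w, hw0, hw1, hwsum⟩ := hεc
    rw [Finset.affineCombination_eq_linear_combination _ _ _ hw1] at hwsum
    set μ : ι → ℝ := fun k => if k ∈ s then w k else 0 with hμ
    have hμ0 : ∀ k, 0 ≤ μ k := by
      intro k; by_cases hk : k ∈ s <;> simp [hμ, hk]
      exact hw0 k hk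
    have hμ1 : ∑ k, μ k = 1 := by
      rw [hμ, Finset.sum_ite_mem, Finset.univ_inter, hw1]
    have hμsum : ∑ k, μ k • u k = (-ε) • c := by
      rw [← hwsum]
      rw [← Finset.sum_subset (Finset.subset_univ s)]
      · apply Finset.sum_congr rfl
        intro k hk; simp [hμ, hk]
      · intro k _ hk; simp [hμ, hk]
    set M : ℝ := (Fintype.card ι : ℝ) with hMdef
    refine ⟨fun k => (μ k + ε) / (1 + ε * M), ?_, ?_, ?_⟩
    · intro k
      have := hμ0 k
      apply div_pos (by linarith) (by nlinarith)
    · rw [← Finset.sum_div, Finset.sum_add_distrib, hμ1]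
      rw [Finset.sum_const, nsmul_eq_mul]
      rw [hMdef]
      field_simp
      simp only [Finset.card_univ]
      ring
    · have expand : ∀ k, ((μ k + ε) / (1 + ε * M)) • u k
          = (1 / (1 + ε * M)) • (μ k • u k + ε • u k) := by
        intro k
        have hεM : 0 < 1 + ε * M := by nlinarith
        rw [smul_add, smul_smul, smul_smul, ← add_smul]
        congr 1
        field_simp
      rw [Finset.sum_congr rfl (fun k _ => expand k), ← Finset.smul_sum]
      rw [Finset.sum_add_distrib, hμsum, ← Finset.smul_sum, ← hc]
      rw [neg_smul, neg_add_cancel, smul_zero]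
  -- the lifted family
  set α : ℝ := ∑ i : Fin (g+1), lam (Sum.inl i) with hα
  have hαpos : 0 < α := Finset.sum_pos (fun i _ => hlampos _) ⟨0, Finset.mem_univ 0⟩
  set τ : Fin N → ℝ := fun j => -(lam (Sum.inr j)) / α with hτ
  set wv : ι → (Fin N → ℝ) := fun k =>
    Sum.elim (fun _ : Fin (g+1) => τ) (fun k' : Fin N => fun j => if j = k' then 1 else 0) k
    with hwv
  set q : ι → (Fin (g+N) → ℝ) := fun k => Fin.append (u k) (wv k) with hq
  have hblock1 : ∀ (c : ι → ℝ) (j : Fin g),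
      (∑ k, c k • q k) (Fin.castAdd N j) = ∑ k, c k * u k j := by
    intro c j
    rw [Finset.sum_apply]
    apply Finset.sum_congr rfl
    intro k _
    simp [hq, Fin.append_left]
  have hblock2 : ∀ (c : ι → ℝ) (j : Fin N),
      (∑ k, c k • q k) (Fin.natAdd g j)
        = (∑ i : Fin (g+1), c (Sum.inl i)) * τ j + c (Sum.inr j) := by
    intro c j
    rw [Finset.sum_apply]
    have hterm : ∀ k : ι, (c k • q k) (Fin.natAdd g j) = c k * wv k j := by
      intro k; simp [hq, Fin.append_right]
    rw [Finset.sum_congr rfl (fun k _ => hterm k), Fintype.sum_sum_type]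
    congr 1
    · have hh : ∀ i : Fin (g+1), c (Sum.inl i) * wv (Sum.inl i) j = c (Sum.inl i) * τ j := by
        intro i; simp [hwv]
      rw [Finset.sum_congr rfl (fun i _ => hh i), ← Finset.sum_mul]
    · simp [hwv]
  have hqsum0 : ∀ x, (∑ k, lam k • q k) x = 0 := by
    intro x
    induction x using Fin.addCases with
    | left j =>
      rw [hblock1]
      have h1 := congrFun hlam0 j
      rw [Finset.sum_apply] at h1
      simpa using h1
    | right j =>
      rw [hblock2]
      simp only [hτ, ← hα]
      field_simp
      ring
  have hqsum : ∑ k, lam k • q k = 0 := by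
    funext x
    simp only [Pi.zero_apply]
    exact hqsum0 x
  -- affine independence
  have hindep : AffineIndependent ℝ q := by
    rw [affineIndependent_iff]
    intro s c hc0 hcq
    set c' : ι → ℝ := fun k => if k ∈ s then c k else 0 with hc'
    have hc'0 : ∑ k, c' k = 0 := by rw [hc', Finset.sum_ite_mem, Finset.univ_inter, hc0]
    have hc'q : ∑ k, c' k • q k = 0 := by
      rw [← hcq, ← Finset.sum_subset (Finset.subset_univ s)]
      · exact Finset.sum_congr rfl (fun k hk => by simp [hc', hk])
      · intro k _ hk; simp [hc', hk]
    suffices hz : ∀ k, c' k = 0 by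
      intro e he
      have := hz e
      simpa [hc', he] using this
    set A := ∑ i : Fin (g+1), c' (Sum.inl i) with hA
    have hb2 : ∀ j : Fin N, A * τ j + c' (Sum.inr j) = 0 := by
      intro j
      rw [← hblock2 c' j, hc'q]
      simp
    have hc'inr : ∀ j, c' (Sum.inr j) = A * lam (Sum.inr j) / α := by
      intro j
      have h2 := hb2 j
      simp only [hτ] at h2
      field_simp at h2 ⊢
      linarith
    have hA0 : A = 0 := by
      have h1 : ∑ j : Fin N, c' (Sum.inr j) = A * (∑ j : Fin N, lam (Sum.inr j)) / α := by
        rw [Finset.sum_congr rfl (fun j _ => hc'inr j), ← Finset.sum_div, ← Finset.mul_sum]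
      have hβ : α + ∑ j : Fin N, lam (Sum.inr j) = 1 := by
        rw [hα, ← Fintype.sum_sum_type]
        exact hlam1
      have h2 := hc'0
      rw [Fintype.sum_sum_type, ← hA, h1] at h2
      have hαne : α ≠ 0 := ne_of_gt hαpos
      field_simp at h2
      nlinarith
    have hinr0 : ∀ j, c' (Sum.inr j) = 0 := by
      intro j; rw [hc'inr j, hA0]; simp
    have hb1 : ∀ j : Fin g, c' (Sum.inl j.succ) = 0 := by
      intro j
      have h3 : (∑ k, c' k • q k) (Fin.castAdd N j) = 0 := by rw [hc'q]; simp
      rw [hblock1] at h3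
      rw [Fintype.sum_sum_type] at h3
      have h4 : ∑ k' : Fin N, c' (Sum.inr k') * u (Sum.inr k') j = 0 := by
        apply Finset.sum_eq_zero
        intro k' _
        rw [hinr0 k', zero_mul]
      rw [h4, add_zero] at h3
      have h5 : ∀ i : Fin (g+1), c' (Sum.inl i) * u (Sum.inl i) j
          = if j.succ = i then c' (Sum.inl i) * δ else 0 := by
        intro i
        simp only [hu, Sum.elim_inl]
        by_cases hji : j.succ = i <;> simp [hji]
      rw [Finset.sum_congr rfl (fun i _ => h5 i), Finset.sum_ite_eq] at h3
      simp only [Finset.mem_univ, if_true] at h3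
      rcases mul_eq_zero.mp h3 with h | h
      · exact h
      · exact absurd h (ne_of_gt hδpos)
    have hinl0 : ∀ i : Fin (g+1), c' (Sum.inl i) = 0 := by
      intro i
      induction i using Fin.cases with
      | zero =>
        have := hA0
        rw [hA, Fin.sum_univ_succ] at this
        have h6 : ∑ j : Fin g, c' (Sum.inl j.succ) = 0 :=
          Finset.sum_eq_zero (fun j _ => hb1 j)
        rw [h6, add_zero] at this
        exact this
      | succ j => exact hb1 j
    rintro (i | j)
    · exact hinl0 i
    · exact hinr0 j
  -- affine basis and interior
  have hcard : Fintype.card ι = Module.finrank ℝ (Fin (g+N) → ℝ) + 1 := by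
    show Fintype.card (Fin (g+1) ⊕ Fin N) = Module.finrank ℝ (Fin (g+N) → ℝ) + 1
    rw [Fintype.card_sum, Module.finrank_pi]
    simp only [Fintype.card_fin]
    omega
  have htop : affineSpan ℝ (Set.range q) = ⊤ :=
    hindep.affineSpan_eq_top_iff_card_eq_finrank_add_one.mpr hcard
  set B : AffineBasis ι ℝ (Fin (g+N) → ℝ) := ⟨q, hindep, htop⟩ with hB
  have hBq : ⇑B = q := rfl
  have hcoord : ∀ k, B.coord k (0 : Fin (g+N) → ℝ) = lam k := by
    intro k
    have h0comb : Finset.univ.affineCombination ℝ (⇑B) lam = (0 : Fin (g+N) → ℝ) := by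
      rw [hBq, Finset.affineCombination_eq_linear_combination _ _ _ hlam1, hqsum]
    rw [← h0comb]
    exact B.coord_apply_combination_of_mem (Finset.mem_univ k) hlam1
  have hint0 : (0 : Fin (g+N) → ℝ) ∈ interior (convexHull ℝ (Set.range q)) := by
    have hrq : Set.range q = Set.range (⇑B) := by rw [hBq]
    rw [hrq, B.interior_convexHull]
    intro k
    rw [hcoord k]
    exact hlampos k
  -- projection
  have hgh : g ≤ g + N := Nat.le_add_right g N
  set L : (Fin (g+N) → ℝ) →ₗ[ℝ] (Fin g → ℝ) := LinearMap.funLeft ℝ ℝ (Fin.castLE hgh) with hL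
  have hLq : L ∘ q = u := by
    funext k
    funext i
    show q k (Fin.castLE hgh i) = u k i
    have hci : Fin.castLE hgh i = Fin.castAdd N i := rfl
    rw [hci, hq]
    simp [Fin.append_left]
  have himg : L '' (convexHull ℝ (Set.range q)) = K := by
    rw [L.image_convexHull, ← Set.range_comp, hLq, ← hKu]
  -- assemble
  have hcast : (g + N) + 1 = (g + 1) + N := by omega
  set e : Fin ((g + N) + 1) ≃ ι := (finCongr hcast).trans finSumFinEquiv.symm with he
  refine ⟨g + N, hgh, q ∘ e, hindep.comp_embedding e.toEmbedding, ?_, ?_⟩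
  · rwa [Function.Surjective.range_comp e.surjective q]
  · rw [Function.Surjective.range_comp e.surjective q]
    exact himg.symm


lemma kset_eq_convexHull (hbdd : Bornology.IsBounded (Kset a b)) :
    Kset a b = convexHull ℝ (Ext a b) := by
  apply Set.Subset.antisymm
  · intro x hx
    exact key a b hbdd (Module.finrank ℝ (Wsub a b x)) x hx le_rfl
  · exact convexHull_min (fun x hx => hx.1) (kset_convex a b)

end BPProj

open BPProj in
/-- Every bounded polyhedron in `ℝ^g` containing `0` in its interior is the coordinate
projection of a simplex (the convex hull of `h+1` affinely independent points in `ℝ^h`)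
containing `0` in its interior. -/
theorem bounded_polyhedron_is_projection_of_simplex (g : ℕ) (K : Set (Fin g → ℝ))
    (hpoly : ∃ (m : ℕ) (a : Fin m → Fin g → ℝ) (b : Fin m → ℝ),
      K = {x | ∀ i, ∑ j, a i j * x j ≤ b i})
    (hbdd : Bornology.IsBounded K)
    (hint : (0 : Fin g → ℝ) ∈ interior K) :
    ∃ (h : ℕ) (hgh : g ≤ h) (p : Fin (h + 1) → Fin h → ℝ),
      AffineIndependent ℝ p ∧
      (0 : Fin h → ℝ) ∈ interior (convexHull ℝ (Set.range p)) ∧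
      K = (fun x : Fin h → ℝ => fun i : Fin g => x (Fin.castLE hgh i)) ''
        (convexHull ℝ (Set.range p)) := by
  classical
  obtain ⟨m, A, b, hK⟩ := hpoly
  set a : Matrix (Fin m) (Fin g) ℝ := Matrix.of A with ha
  have hKset : K = Kset a b := by
    rw [hK]
    rfl
  have hEfin := ext_finite a b
  set s : Finset (Fin g → ℝ) := hEfin.toFinset with hs
  set N : ℕ := s.card with hN
  set v : Fin N → (Fin g → ℝ) := fun i => (s.equivFin.symm i : Fin g → ℝ) with hv
  have hvrange : Set.range v = Ext a b := by
    ext y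
    constructor
    · rintro ⟨i, rfl⟩
      exact hEfin.mem_toFinset.mp (s.equivFin.symm i).2
    · intro hy
      refine ⟨s.equivFin ⟨y, hEfin.mem_toFinset.mpr hy⟩, ?_⟩
      simp [hv]
  have hconvE : Kset a b = convexHull ℝ (Ext a b) :=
    kset_eq_convexHull a b (hKset ▸ hbdd)
  apply construction g N K
  · rw [hKset]; exact kset_convex a b
  · intro k
    rw [hKset]
    have : v k ∈ Ext a b := by rw [← hvrange]; exact ⟨k, rfl⟩
    exact this.1
  · rw [hKset, hconvE, hvrange]
  · exact hint
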